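/- In the winner-bid auction with valuations v_l < v_h (both even positive integers), tie-breaker favoring the high-valuation agent, and bid set {0,...,p̄} with p̄ ≥ v_h/2, if σ = (σ_l, σ_h) is a Nash equilibrium, then there exists a bid p with v_l/2 ≤ p ≤ v_h/2 such that p is in the support of both σ_l and σ_h, the support of σ_l is contained in {0,...,p}, and the support of σ_h is contained in {p,...,p̄}. -/
import Mathlib


open Finset Filter

/-- Payoff to the low-valuation agent in the winner-bid auction when she bids `b`
and the high-valuation agent bids `r` (ties won by the high-valuation agent). -/
noncomputable def UlWB (vl : ℕ) (b r : ℕ) : ℝ := if r < b then (vl : ℝ) - b else (r : ℝ)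

/-- Payoff to the high-valuation agent in the winner-bid auction when she bids `b`
and the low-valuation agent bids `r` (ties won by the high-valuation agent). -/
noncomputable def UhWB (vh : ℕ) (b r : ℕ) : ℝ := if r ≤ b then (vh : ℝ) - b else (r : ℝ)

/-- A mixed strategy on the bid set `{0, ..., pbar}`. -/
def IsMixed (pbar : ℕ) (σ : ℕ → ℝ) : Prop :=
  (∀ b, 0 ≤ σ b) ∧ (∀ b, pbar < b → σ b = 0) ∧ ∑ b ∈ Finset.range (pbar + 1), σ b = 1

/-- Expected payoff for the low-valuation agent of bidding `b` against `σh`. -/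
noncomputable def eUl (pbar vl : ℕ) (σh : ℕ → ℝ) (b : ℕ) : ℝ :=
  ∑ r ∈ Finset.range (pbar + 1), σh r * UlWB vl b r

/-- Expected payoff for the high-valuation agent of bidding `b` against `σl`. -/
noncomputable def eUh (pbar vh : ℕ) (σl : ℕ → ℝ) (b : ℕ) : ℝ :=
  ∑ r ∈ Finset.range (pbar + 1), σl r * UhWB vh b r

/-- Nash equilibrium of the winner-bid auction. -/
def IsNashWB (pbar vl vh : ℕ) (σl σh : ℕ → ℝ) : Prop :=
  IsMixed pbar σl ∧ IsMixed pbar σh ∧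
  (∀ b ≤ pbar, 0 < σl b → ∀ b' ≤ pbar, eUl pbar vl σh b' ≤ eUl pbar vl σh b) ∧
  (∀ b ≤ pbar, 0 < σh b → ∀ b' ≤ pbar, eUh pbar vh σl b' ≤ eUh pbar vh σl b)

/-- Expected payoff of the low-valuation agent at a mixed profile. -/
noncomputable def piL (pbar vl : ℕ) (σl σh : ℕ → ℝ) : ℝ :=
  ∑ b ∈ Finset.range (pbar + 1), σl b * eUl pbar vl σh b

/-- Expected payoff of the high-valuation agent at a mixed profile. -/
noncomputable def piH (pbar vh : ℕ) (σl σh : ℕ → ℝ) : ℝ :=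
  ∑ b ∈ Finset.range (pbar + 1), σh b * eUh pbar vh σl b

/-- Weak payoff monotonicity for the low-valuation agent. -/
def WPMl (pbar vl : ℕ) (σl σh : ℕ → ℝ) : Prop :=
  ∀ a ≤ pbar, ∀ b ≤ pbar, σl b < σl a → eUl pbar vl σh b < eUl pbar vl σh a

/-- Weak payoff monotonicity for the high-valuation agent. -/
def WPMh (pbar vh : ℕ) (σl σh : ℕ → ℝ) : Prop :=
  ∀ a ≤ pbar, ∀ b ≤ pbar, σh b < σh a → eUh pbar vh σl b < eUh pbar vh σl a

/-- Expected bid under a mixed strategy. -/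
noncomputable def Ebid (pbar : ℕ) (σ : ℕ → ℝ) : ℝ :=
  ∑ b ∈ Finset.range (pbar + 1), σ b * b

lemma wb_ite_sum (pbar k : ℕ) (σ : ℕ → ℝ) (hk : k ≤ pbar + 1) :
    ∑ r ∈ Finset.range k, σ r
      = ∑ r ∈ Finset.range (pbar+1), (if r < k then σ r else 0) := by
  rw [← Finset.sum_subset (Finset.range_subset_range.2 hk)
      (fun x _ hx => if_neg (by simpa using hx))]
  exact Finset.sum_congr rfl (fun r hr => (if_pos (Finset.mem_range.1 hr)).symm)

lemma wb_L1 (pbar cl b : ℕ) (σh : ℕ → ℝ) (hpos : ∀ r, 0 ≤ σh r)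
    (hb : b ≤ pbar) (hclb : cl ≤ b) :
    eUl pbar (2*cl) σh (b+1) + ∑ r ∈ Finset.range (b+1), σh r ≤ eUl pbar (2*cl) σh b := by
  rw [wb_ite_sum pbar (b+1) σh (by omega)]
  unfold eUl
  rw [← Finset.sum_add_distrib]
  apply Finset.sum_le_sum
  intro r hr
  have hc : (cl : ℝ) ≤ b := by exact_mod_cast hclb
  have h0 := hpos r
  simp only [UlWB]
  by_cases hA : r < b
  · rw [if_pos (show r < b+1 by omega), if_pos (show r < b+1 by omega), if_pos hA]
    push_cast; nlinarith [h0]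
  · by_cases hB : r = b
    · subst hB
      rw [if_pos (Nat.lt_succ_self _), if_pos (Nat.lt_succ_self _),
        if_neg (lt_irrefl _)]
      push_cast
      nlinarith [mul_nonneg h0 (sub_nonneg.2 hc)]
    · have hC : ¬ r < b + 1 := by omega
      rw [if_neg hC, if_neg hC, if_neg (show ¬ r < b by omega)]
      nlinarith [h0]

lemma wb_L2 (pbar ch b : ℕ) (σl : ℕ → ℝ) (hpos : ∀ r, 0 ≤ σl r)
    (hb : b + 1 ≤ pbar) (hchb : ch ≤ b) :
    eUh pbar (2*ch) σl (b+1) + ∑ r ∈ Finset.range (b+2), σl r ≤ eUh pbar (2*ch) σl b := by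
  rw [wb_ite_sum pbar (b+2) σl (by omega)]
  unfold eUh
  rw [← Finset.sum_add_distrib]
  apply Finset.sum_le_sum
  intro r hr
  have hc : (ch : ℝ) ≤ b := by exact_mod_cast hchb
  have h0 := hpos r
  simp only [UhWB]
  by_cases hA : r ≤ b
  · rw [if_pos (show r ≤ b+1 by omega), if_pos (show r < b+2 by omega), if_pos hA]
    push_cast; nlinarith [h0]
  · by_cases hB : r = b + 1
    · subst hB
      rw [if_pos (le_refl _), if_pos (Nat.lt_succ_self _),
        if_neg (Nat.not_succ_le_self _)]
      push_cast
      nlinarith [mul_nonneg h0 (sub_nonneg.2 hc)]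
    · have hC : ¬ r ≤ b + 1 := by omega
      rw [if_neg hC, if_neg (show ¬ r < b+2 by omega), if_neg hA]
      nlinarith [h0]

lemma wb_eUh_const (pbar vh c : ℕ) (σl : ℕ → ℝ)
    (hsum : ∑ r ∈ Finset.range (pbar+1), σl r = 1)
    (hzero : ∀ r, c < r → σl r = 0) :
    eUh pbar vh σl c = (vh : ℝ) - c := by
  unfold eUh
  have : ∀ r ∈ Finset.range (pbar+1), σl r * UhWB vh c r = σl r * ((vh:ℝ) - c) := by
    intro r _
    by_cases h : r ≤ c
    · simp [UhWB, h]
    · rw [hzero r (by omega)]; ring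
  rw [Finset.sum_congr rfl this, ← Finset.sum_mul, hsum, one_mul]

lemma wb_eUl_low (pbar vl m : ℕ) (σh : ℕ → ℝ) (hzero : ∀ r, r < m → σh r = 0)
    (b : ℕ) (hb : b ≤ m) :
    eUl pbar vl σh b = ∑ r ∈ Finset.range (pbar+1), σh r * r := by
  unfold eUl
  apply Finset.sum_congr rfl
  intro r _
  by_cases h : r < b
  · rw [hzero r (by omega)]; ring
  · simp [UlWB, h]

lemma wb_eUl_succ (pbar vl m : ℕ) (σh : ℕ → ℝ) (hzero : ∀ r, r < m → σh r = 0)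
    (hm : m ≤ pbar) :
    eUl pbar vl σh (m+1)
      = (∑ r ∈ Finset.range (pbar+1), σh r * r) + σh m * ((vl:ℝ) - 2*m - 1) := by
  have key : eUl pbar vl σh (m+1) - ∑ r ∈ Finset.range (pbar+1), σh r * r
      = ∑ r ∈ Finset.range (pbar+1), σh r * (UlWB vl (m+1) r - r) := by
    unfold eUl
    rw [← Finset.sum_sub_distrib]
    exact Finset.sum_congr rfl (fun r _ => by ring)
  have hval : ∑ r ∈ Finset.range (pbar+1), σh r * (UlWB vl (m+1) r - r)
      = σh m * ((vl:ℝ) - 2*m - 1) := by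
    rw [Finset.sum_eq_single m]
    · simp only [UlWB, show m < m + 1 from by omega, if_pos]
      push_cast; ring
    · intro r _ hrm
      rcases lt_or_gt_of_ne hrm with h | h
      · rw [hzero r h]; ring
      · have : ¬ r < m + 1 := by omega
        simp [UlWB, this]
    · intro h
      exact absurd (Finset.mem_range.2 (by omega)) h
  linarith [key, hval]


/-- In the winner-bid auction (valuations `vl = 2*cl < vh = 2*ch`, even positive; ties to the
high-valuation agent; bids in `{0,...,pbar}` with `pbar ≥ vh/2`), every Nash equilibrium has a
bid `p` in the Nash range `{cl,...,ch}` lying in both supports, with `σl` supported in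
`{0,...,p}` and `σh` supported in `{p,...,pbar}`. -/
theorem stmt0 (pbar vl vh cl ch : ℕ) (hvl : vl = 2 * cl) (hvh : vh = 2 * ch)
    (hcl : 0 < cl) (hclch : cl < ch) (hpbar : ch ≤ pbar)
    (σl σh : ℕ → ℝ) (hNash : IsNashWB pbar vl vh σl σh) :
    ∃ p, cl ≤ p ∧ p ≤ ch ∧ 0 < σl p ∧ 0 < σh p ∧
      (∀ b, 0 < σl b → b ≤ p) ∧ (∀ b, 0 < σh b → p ≤ b) := by
  subst hvl hvh
  obtain ⟨⟨hlpos, hlz, hlsum⟩, ⟨hhpos, hhz, hhsum⟩, hNl, hNh⟩ := hNash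
  classical
  have hex : ∃ b, 0 < σh b := by
    by_contra hcon
    push_neg at hcon
    have hz : ∀ b ∈ Finset.range (pbar+1), σh b = 0 :=
      fun b _ => le_antisymm (hcon b) (hhpos b)
    rw [Finset.sum_eq_zero hz] at hhsum
    norm_num at hhsum
  obtain ⟨m, hm, hmin, hmzero⟩ :
      ∃ m, 0 < σh m ∧ (∀ b, 0 < σh b → m ≤ b) ∧ (∀ r, r < m → σh r = 0) :=
    ⟨Nat.find hex, Nat.find_spec hex, fun b hb => Nat.find_le hb,
      fun r hr => le_antisymm (not_lt.1 (Nat.find_min hex hr)) (hhpos r)⟩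
  have hmpbar : m ≤ pbar := by
    by_contra hcon
    push_neg at hcon
    exact absurd (hhz m hcon) (ne_of_gt hm)
  -- Step 1: σl vanishes above max (cl, m)
  have step1 : ∀ b, cl < b → m < b → σl b = 0 := by
    intro b hb1 hb2
    by_contra hbne
    have hσ : 0 < σl b := (hlpos b).lt_of_ne (Ne.symm hbne)
    have hbp : b ≤ pbar := by
      by_contra hbp
      push_neg at hbp
      exact hbne (hlz b hbp)
    obtain ⟨c, rfl⟩ : ∃ c, b = c + 1 := ⟨b - 1, by omega⟩
    have hbest := hNl (c+1) hbp hσ c (by omega)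
    have h1 := wb_L1 pbar cl c σh hhpos (by omega) (by omega)
    have hsumpos : 0 < ∑ r ∈ Finset.range (c+1), σh r := by
      have hmem : m ∈ Finset.range (c+1) := Finset.mem_range.2 (by omega)
      have := Finset.single_le_sum (f := σh) (fun i _ => hhpos i) hmem
      linarith
    linarith
  -- Step 2: m ≤ ch
  have step2 : m ≤ ch := by
    by_contra hcon
    push_neg at hcon
    have hF : ∑ r ∈ Finset.range (m+1), σl r = 1 := by
      rw [← hlsum]
      apply Finset.sum_subset (Finset.range_subset_range.2 (by omega))
      intro x _ hx'
      simp only [Finset.mem_range, not_lt] at hx'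
      exact step1 x (by omega) (by omega)
    obtain ⟨c, hc⟩ : ∃ c, m = c + 1 := ⟨m - 1, by omega⟩
    have h2 := wb_L2 pbar ch c σl hlpos (by omega) (by omega)
    have hbest := hNh m hmpbar hm c (by omega)
    rw [hc] at hbest
    have hmm : c + 2 = m + 1 := by omega
    have hF' : ∑ r ∈ Finset.range (c+2), σl r = 1 := by rw [hmm]; exact hF
    linarith
  -- Step 3: cl ≤ m
  have step3 : cl ≤ m := by
    by_contra hcon
    push_neg at hcon
    have hlow : ∀ b, b ≤ m → σl b = 0 := by
      intro b hb
      by_contra hbne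
      have hσ : 0 < σl b := (hlpos b).lt_of_ne (Ne.symm hbne)
      have hbest := hNl b (by omega) hσ (m+1) (by omega)
      have e1 := wb_eUl_low pbar (2*cl) m σh hmzero b hb
      have e2 := wb_eUl_succ pbar (2*cl) m σh hmzero hmpbar
      have hcoef : (1:ℝ) ≤ ((2*cl:ℕ):ℝ) - 2*m - 1 := by
        have : (m:ℝ) + 1 ≤ cl := by exact_mod_cast (by omega : m + 1 ≤ cl)
        push_cast
        linarith
      have hmul : σh m * 1 ≤ σh m * (((2*cl:ℕ):ℝ) - 2*m - 1) :=
        mul_le_mul_of_nonneg_left hcoef (le_of_lt hm)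
      linarith
    have hhigh : ∀ b, cl < b → σl b = 0 := fun b hb => step1 b hb (by omega)
    have ecl : eUh pbar (2*ch) σl cl = ((2*ch:ℕ):ℝ) - cl :=
      wb_eUh_const pbar (2*ch) cl σl hlsum hhigh
    have em : eUh pbar (2*ch) σl m ≤ (cl:ℝ) := by
      unfold eUh
      calc ∑ r ∈ Finset.range (pbar+1), σl r * UhWB (2*ch) m r
          ≤ ∑ r ∈ Finset.range (pbar+1), σl r * (cl:ℝ) := by
            apply Finset.sum_le_sum
            intro r _
            by_cases h1 : r ≤ m
            · rw [hlow r h1]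
              simp
            · by_cases h2 : r ≤ cl
              · rw [UhWB, if_neg (by omega)]
                exact mul_le_mul_of_nonneg_left (by exact_mod_cast h2) (hlpos r)
              · rw [hhigh r (by omega)]
                simp
        _ = (cl:ℝ) := by rw [← Finset.sum_mul, hlsum, one_mul]
    have hbest := hNh m hmpbar hm cl (by omega)
    rw [ecl] at hbest
    have hlt : (cl:ℝ) < ((2*ch:ℕ):ℝ) - cl := by
      have : (cl:ℝ) < ch := by exact_mod_cast hclch
      push_cast
      linarith
    linarith
  -- Step 4: 0 < σl m
  have step4 : 0 < σl m := by
    rcases (hlpos m).lt_or_eq with hpos | heq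
    · exact hpos
    · exfalso
      have hz1 : ∀ r, m - 1 < r → σl r = 0 := by
        intro r hr
        rcases eq_or_lt_of_le (show m ≤ r by omega) with he | hlt
        · rw [← he]
          exact heq.symm
        · exact step1 r (by omega) hlt
      have hz2 : ∀ r, m < r → σl r = 0 := fun r hr => hz1 r (by omega)
      have e1 : eUh pbar (2*ch) σl m = ((2*ch:ℕ):ℝ) - m :=
        wb_eUh_const pbar (2*ch) m σl hlsum hz2
      have e2 : eUh pbar (2*ch) σl (m-1) = ((2*ch:ℕ):ℝ) - ((m-1:ℕ):ℝ) :=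
        wb_eUh_const pbar (2*ch) (m-1) σl hlsum hz1
      have hbest := hNh m hmpbar hm (m-1) (by omega)
      rw [e1, e2] at hbest
      have : ((m-1:ℕ):ℝ) < (m:ℝ) := by exact_mod_cast (by omega : m - 1 < m)
      linarith
  refine ⟨m, step3, step2, step4, hm, ?_, fun b hb => hmin b hb⟩
  intro b hb
  by_contra hc
  push_neg at hc
  exact absurd (step1 b (by omega) hc) (ne_of_gt hb)
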